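/- Let A be a t-intersecting family of set partitions of [n], let i ≠ j in [n], and let A_{ij} = { P ∈ A : s_{ij}(P) ∉ A }. Then the family S_{ij}(A) = (A \ A_{ij}) ∪ s_{ij}(A_{ij}) is t-intersecting and |S_{ij}(A)| = |A|. -/
import Mathlib

/-- A set partition of `Fin n`, modelled as a finite set of blocks. -/
def IsSetPartition {n : ℕ} (P : Finset (Finset (Fin n))) : Prop :=
  (∀ b ∈ P, b.Nonempty) ∧ (∀ b ∈ P, ∀ c ∈ P, b ≠ c → Disjoint b c) ∧
    P.sup id = Finset.univ

/-- The `n`-th Bell number: the number of set partitions of an `n`-element set. -/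
noncomputable def bell (n : ℕ) : ℕ :=
  Set.ncard {P : Finset (Finset (Fin n)) | IsSetPartition P}

/-- The number of singleton-free set partitions of an `n`-element set. -/
noncomputable def bellT (n : ℕ) : ℕ :=
  Set.ncard {P : Finset (Finset (Fin n)) | IsSetPartition P ∧ ∀ b ∈ P, 2 ≤ b.card}

/-- The `(i,j)`-split of a set partition `P`. -/
noncomputable def splitP {n : ℕ} (i j : Fin n) (P : Finset (Finset (Fin n))) :
    Finset (Finset (Fin n)) :=
  if h : ∃ B, B ∈ P ∧ i ∈ B ∧ j ∈ B then
    (P \ {h.choose}) ∪ {{i}, h.choose \ {i}}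
  else P

/-- The `(i,j)`-splitting of a family of set partitions. -/
noncomputable def splitFam {n : ℕ} (i j : Fin n)
    (A : Set (Finset (Finset (Fin n)))) : Set (Finset (Finset (Fin n))) :=
  (A \ {P ∈ A | splitP i j P ∉ A}) ∪ (splitP i j '' {P ∈ A | splitP i j P ∉ A})

/-- A family is `t`-intersecting if any two members share at least `t` blocks. -/
def TInter {n : ℕ} (t : ℕ) (A : Set (Finset (Finset (Fin n)))) : Prop :=
  ∀ P ∈ A, ∀ Q ∈ A, t ≤ (P ∩ Q).card

section Aux

variable {n : ℕ} {i j : Fin n} {P Q : Finset (Finset (Fin n))} {B C : Finset (Fin n)}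

lemma block_eq (hP : IsSetPartition P) (hB : B ∈ P) (hC : C ∈ P) {x : Fin n}
    (hx : x ∈ B) (hx' : x ∈ C) : B = C := by
  by_contra h
  exact (Finset.disjoint_left.mp (hP.2.1 B hB C hC h) hx) hx'

lemma splitP_spec (hP : IsSetPartition P) (hB : B ∈ P) (hi : i ∈ B) (hj : j ∈ B) :
    splitP i j P = (P \ {B}) ∪ {{i}, B \ {i}} := by
  have h : ∃ C, C ∈ P ∧ i ∈ C ∧ j ∈ C := ⟨B, hB, hi, hj⟩
  rw [splitP, dif_pos h]
  have hc : h.choose = B := block_eq hP h.choose_spec.1 hB h.choose_spec.2.1 hi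
  rw [hc]

lemma exists_block_of_split_ne (h : splitP i j P ≠ P) : ∃ B, B ∈ P ∧ i ∈ B ∧ j ∈ B := by
  by_contra hc
  exact h (by rw [splitP, dif_neg hc])

lemma singleton_notMem (hP : IsSetPartition P) (hB : B ∈ P) (hi : i ∈ B) (hj : j ∈ B)
    (hij : i ≠ j) : ({i} : Finset (Fin n)) ∉ P := by
  intro h
  have hBe : ({i} : Finset (Fin n)) = B :=
    block_eq hP h hB (Finset.mem_singleton_self i) hi
  rw [← hBe] at hj
  exact hij (Finset.mem_singleton.mp hj).symm

lemma sdiff_notMem (hP : IsSetPartition P) (hB : B ∈ P) (hi : i ∈ B) (hj : j ∈ B)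
    (hij : i ≠ j) : B \ {i} ∉ P := by
  intro h
  have hBe : B \ {i} = B :=
    block_eq hP h hB (Finset.mem_sdiff.mpr ⟨hj, by simp [Ne.symm hij]⟩) hj
  have : i ∈ B \ {i} := by rw [hBe]; exact hi
  simp at this

lemma mem_of_split_eq (hP : IsSetPartition P) (hQ : IsSetPartition Q) (hij : i ≠ j)
    (hBP : B ∈ P) (hi : i ∈ B) (hj : j ∈ B) (hBQ : B ∈ Q)
    (h : (P \ {B}) ∪ {{i}, B \ {i}} = (Q \ {B}) ∪ {{i}, B \ {i}})
    {x : Finset (Fin n)} (hx : x ∈ P) : x ∈ Q := by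
  by_cases hxB : x = B
  · exact hxB ▸ hBQ
  · have hx1 : x ∈ (Q \ {B}) ∪ {{i}, B \ {i}} := by
      rw [← h]
      exact Finset.mem_union_left _ (Finset.mem_sdiff.mpr ⟨hx, by simp [hxB]⟩)
    rcases Finset.mem_union.mp hx1 with h1 | h1
    · exact (Finset.mem_sdiff.mp h1).1
    · rcases Finset.mem_insert.mp h1 with h2 | h2
      · exact absurd (h2 ▸ hx) (singleton_notMem hP hBP hi hj hij)
      · exact absurd ((Finset.mem_singleton.mp h2) ▸ hx) (sdiff_notMem hP hBP hi hj hij)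

lemma splitP_inj {BP BQ : Finset (Fin n)} (hP : IsSetPartition P) (hQ : IsSetPartition Q)
    (hij : i ≠ j) (hBP : BP ∈ P) (hiP : i ∈ BP) (hjP : j ∈ BP)
    (hBQ : BQ ∈ Q) (hiQ : i ∈ BQ) (hjQ : j ∈ BQ)
    (h : splitP i j P = splitP i j Q) : P = Q := by
  rw [splitP_spec hP hBP hiP hjP, splitP_spec hQ hBQ hiQ hjQ] at h
  -- first, BP = BQ
  have hmem : BP \ {i} ∈ (Q \ {BQ}) ∪ {{i}, BQ \ {i}} := by
    rw [← h]
    exact Finset.mem_union_right _ (by simp)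
  have hjBP : j ∈ BP \ {i} := Finset.mem_sdiff.mpr ⟨hjP, by simp [Ne.symm hij]⟩
  have hBeq : BP = BQ := by
    rcases Finset.mem_union.mp hmem with h1 | h1
    · have h1' := (Finset.mem_sdiff.mp h1).1
      have : BP \ {i} = BQ := block_eq hQ h1' hBQ hjBP hjQ
      exact absurd (this ▸ hiQ) (by simp)
    · rcases Finset.mem_insert.mp h1 with h2 | h2
      · rw [h2] at hjBP
        exact absurd (Finset.mem_singleton.mp hjBP).symm hij
      · have h2' := Finset.mem_singleton.mp h2
        have : insert i (BP \ {i}) = insert i (BQ \ {i}) := by rw [h2']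
        rwa [← Finset.erase_eq, ← Finset.erase_eq, Finset.insert_erase hiP,
          Finset.insert_erase hiQ] at this
  subst hBeq
  ext x
  exact ⟨mem_of_split_eq hP hQ hij hBP hiP hjP hBQ h,
    mem_of_split_eq hQ hP hij hBQ hiQ hjQ hBP h.symm⟩

/-- Case: `B` is a common block of `P` and `Q` containing `i,j`. -/
lemma split_inter_eq (hQ : IsSetPartition Q) (hij : i ≠ j)
    (hBQ : B ∈ Q) (hi : i ∈ B) (hj : j ∈ B) :
    ((P \ {B}) ∪ {{i}, B \ {i}}) ∩ Q = (P ∩ Q) \ {B} := by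
  ext x
  simp only [Finset.mem_inter, Finset.mem_union, Finset.mem_sdiff, Finset.mem_insert,
    Finset.mem_singleton]
  constructor
  · rintro ⟨h1 | h1, hxQ⟩
    · exact ⟨⟨h1.1, hxQ⟩, h1.2⟩
    · rcases h1 with h2 | h2
      · exact absurd (h2 ▸ hxQ) (singleton_notMem hQ hBQ hi hj hij)
      · exact absurd (h2 ▸ hxQ) (sdiff_notMem hQ hBQ hi hj hij)
  · rintro ⟨⟨hxP, hxQ⟩, hxB⟩
    exact ⟨Or.inl ⟨hxP, hxB⟩, hxQ⟩

end Aux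

theorem splitFam_tInter_card {n t : ℕ} (i j : Fin n) (hij : i ≠ j)
    (A : Set (Finset (Finset (Fin n))))
    (hpart : ∀ P ∈ A, IsSetPartition P) (hA : TInter t A) :
    TInter t (splitFam i j A) ∧ (splitFam i j A).ncard = A.ncard := by
  classical
  set Aij : Set (Finset (Finset (Fin n))) := {P ∈ A | splitP i j P ∉ A} with hAijdef
  have hsf : splitFam i j A = (A \ Aij) ∪ (splitP i j '' Aij) := rfl
  have hblk : ∀ P ∈ Aij, ∃ B, B ∈ P ∧ i ∈ B ∧ j ∈ B := by
    intro P hP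
    apply exists_block_of_split_ne
    intro he
    exact hP.2 (by rw [he]; exact hP.1)
  -- the mixed case
  have main2 : ∀ P ∈ A, splitP i j P ∉ A → ∀ B ∈ P, i ∈ B → j ∈ B →
      ∀ Q' ∈ A, splitP i j Q' ∈ A → t ≤ (splitP i j P ∩ Q').card := by
    intro P hPA hPs B hB hi hj Q' hQ'A hQ's
    have hPp := hpart P hPA
    have hQ'p := hpart Q' hQ'A
    rw [splitP_spec hPp hB hi hj]
    by_cases hBQ : B ∈ Q'
    · rw [split_inter_eq hQ'p hij hBQ hi hj]
      have h1 : splitP i j Q' = (Q' \ {B}) ∪ {{i}, B \ {i}} :=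
        splitP_spec hQ'p hBQ hi hj
      have h2 : P ∩ splitP i j Q' = (P ∩ Q') \ {B} := by
        rw [h1, Finset.inter_comm, split_inter_eq hPp hij hB hi hj, Finset.inter_comm]
      have := hA P hPA (splitP i j Q') hQ's
      rwa [h2] at this
    · refine le_trans (hA P hPA Q' hQ'A) (Finset.card_le_card ?_)
      intro x hx
      rcases Finset.mem_inter.mp hx with ⟨hxP, hxQ⟩
      refine Finset.mem_inter.mpr ⟨Finset.mem_union_left _ ?_, hxQ⟩
      exact Finset.mem_sdiff.mpr ⟨hxP, by
        simp only [Finset.mem_singleton]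
        rintro rfl
        exact hBQ hxQ⟩
  constructor
  · rintro P' hP' Q' hQ'
    have hcases : ∀ R ∈ splitFam i j A,
        (R ∈ A ∧ splitP i j R ∈ A) ∨ ∃ P ∈ Aij, R = splitP i j P := by
      intro R hR
      rcases hR with hR | ⟨P, hP, rfl⟩
      · left
        refine ⟨hR.1, ?_⟩
        by_contra hc
        exact hR.2 ⟨hR.1, hc⟩
      · right
        exact ⟨P, hP, rfl⟩
    rcases hcases P' hP' with ⟨hPA, hPs⟩ | ⟨P, hPm, rfl⟩ <;>
      rcases hcases Q' hQ' with ⟨hQA, hQs⟩ | ⟨Q, hQm, rfl⟩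
    · exact hA P' hPA Q' hQA
    · obtain ⟨B, hB, hi, hj⟩ := hblk Q hQm
      rw [Finset.inter_comm]
      exact main2 Q hQm.1 hQm.2 B hB hi hj P' hPA hPs
    · obtain ⟨B, hB, hi, hj⟩ := hblk P hPm
      exact main2 P hPm.1 hPm.2 B hB hi hj Q' hQA hQs
    · -- both are split
      obtain ⟨BP, hBP, hiP, hjP⟩ := hblk P hPm
      obtain ⟨BQ, hBQ, hiQ, hjQ⟩ := hblk Q hQm
      have hPp := hpart P hPm.1
      have hQp := hpart Q hQm.1
      have ht := hA P hPm.1 Q hQm.1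
      rw [splitP_spec hPp hBP hiP hjP, splitP_spec hQp hBQ hiQ hjQ]
      by_cases hBeq : BP = BQ
      · subst hBeq
        set D := (P ∩ Q) \ {BP} with hD
        have hsub : D ∪ {{i}, BP \ {i}} ⊆
            ((P \ {BP}) ∪ {{i}, BP \ {i}}) ∩ ((Q \ {BP}) ∪ {{i}, BP \ {i}}) := by
          intro x hx
          rcases Finset.mem_union.mp hx with hx | hx
          · rcases Finset.mem_sdiff.mp hx with ⟨hx1, hx2⟩
            rcases Finset.mem_inter.mp hx1 with ⟨hxP, hxQ⟩
            exact Finset.mem_inter.mpr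
              ⟨Finset.mem_union_left _ (Finset.mem_sdiff.mpr ⟨hxP, hx2⟩),
               Finset.mem_union_left _ (Finset.mem_sdiff.mpr ⟨hxQ, hx2⟩)⟩
          · exact Finset.mem_inter.mpr
              ⟨Finset.mem_union_right _ hx, Finset.mem_union_right _ hx⟩
        have hdisj : Disjoint D ({{i}, BP \ {i}} : Finset (Finset (Fin n))) := by
          rw [Finset.disjoint_right]
          intro x hx hxD
          have hxP : x ∈ P := (Finset.mem_inter.mp (Finset.mem_sdiff.mp hxD).1).1
          rcases Finset.mem_insert.mp hx with rfl | h2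
          · exact singleton_notMem hPp hBP hiP hjP hij hxP
          · rw [Finset.mem_singleton] at h2
            exact sdiff_notMem hPp hBP hiP hjP hij (h2 ▸ hxP)
        have hcard2 : ({{i}, BP \ {i}} : Finset (Finset (Fin n))).card = 2 := by
          rw [Finset.card_insert_of_notMem, Finset.card_singleton]
          simp only [Finset.mem_singleton]
          intro hc
          have : i ∈ BP \ {i} := hc ▸ Finset.mem_singleton_self i
          simp at this
        have hle : (P ∩ Q).card ≤ D.card + 1 := by
          have : P ∩ Q ⊆ insert BP D := by
            intro x hx
            by_cases hxB : x = BP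
            · exact hxB ▸ Finset.mem_insert_self _ _
            · exact Finset.mem_insert_of_mem (Finset.mem_sdiff.mpr ⟨hx, by simp [hxB]⟩)
          calc (P ∩ Q).card ≤ (insert BP D).card := Finset.card_le_card this
            _ ≤ D.card + 1 := Finset.card_insert_le _ _
        calc t ≤ (P ∩ Q).card := ht
          _ ≤ D.card + 1 := hle
          _ ≤ D.card + 2 := by omega
          _ = (D ∪ {{i}, BP \ {i}}).card := by
              rw [Finset.card_union_of_disjoint hdisj, hcard2]
          _ ≤ _ := Finset.card_le_card hsub
      · have hBPQ : BP ∉ Q := fun hc =>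
          hBeq (block_eq hQp hc hBQ hjP hjQ)
        have hBQP : BQ ∉ P := fun hc =>
          hBeq (block_eq hPp hBP hc hiP hiQ)
        refine le_trans ht (Finset.card_le_card ?_)
        intro x hx
        rcases Finset.mem_inter.mp hx with ⟨hxP, hxQ⟩
        refine Finset.mem_inter.mpr
          ⟨Finset.mem_union_left _ (Finset.mem_sdiff.mpr ⟨hxP, ?_⟩),
           Finset.mem_union_left _ (Finset.mem_sdiff.mpr ⟨hxQ, ?_⟩)⟩
        · simp only [Finset.mem_singleton]; rintro rfl; exact hBPQ hxQ
        · simp only [Finset.mem_singleton]; rintro rfl; exact hBQP hxP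
  · rw [hsf]
    have hdisj : Disjoint (A \ Aij) (splitP i j '' Aij) := by
      rw [Set.disjoint_right]
      rintro x ⟨P, hP, rfl⟩ hx
      exact hP.2 hx.1
    have hinj : Set.InjOn (splitP i j) Aij := by
      intro P hP Q hQ h
      obtain ⟨BP, hBP, hiP, hjP⟩ := hblk P hP
      obtain ⟨BQ, hBQ, hiQ, hjQ⟩ := hblk Q hQ
      exact splitP_inj (hpart P hP.1) (hpart Q hQ.1) hij hBP hiP hjP hBQ hiQ hjQ h
    rw [Set.ncard_union_eq hdisj (Set.toFinite _) (Set.toFinite _),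
      Set.ncard_image_of_injOn hinj,
      Set.ncard_diff_add_ncard_of_subset (Set.sep_subset _ _) (Set.toFinite _)]
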